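/- Let α ∈ ℂ with |α| = 1 and, for real r, let D₃(r) be the 3×3 matrix [[r, conj(α), 2·conj(α)²], [α, r, 1], [2α², 1, r]]. Then: (1) det D₃(r) = r³ − 6r + 2α + 2conj(α) for every real r; (2) the polynomial r³ − 6r + 2α + 2conj(α) (which has real coefficients since 2α + 2conj(α) = 4 Re α) has a largest real root r̂, which is positive and is a simple root; (3) D₃(r̂) is Hermitian positive semidefinite of rank 2 (corank one). -/

import Mathlib

open scoped ComplexOrder

/-- The matrix `D₃(r)` of the 3⊗3 construction. -/
noncomputable def D3 (α : ℂ) (r : ℝ) : Matrix (Fin 3) (Fin 3) ℂ :=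
  !![(r : ℂ), (starRingEnd ℂ) α, 2 * ((starRingEnd ℂ) α) ^ 2;
     α, (r : ℂ), 1;
     2 * α ^ 2, 1, (r : ℂ)]

set_option maxHeartbeats 1000000 in
theorem stmt9 (α : ℂ) (hα : ‖α‖ = 1) :
    (∀ r : ℝ, (D3 α r).det = (r : ℂ) ^ 3 - 6 * (r : ℂ) + 2 * α + 2 * (starRingEnd ℂ) α) ∧
    ∃ rh : ℝ,
      ((rh : ℂ) ^ 3 - 6 * (rh : ℂ) + 2 * α + 2 * (starRingEnd ℂ) α = 0) ∧
      (∀ s : ℝ, (s : ℂ) ^ 3 - 6 * (s : ℂ) + 2 * α + 2 * (starRingEnd ℂ) α = 0 → s ≤ rh) ∧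
      0 < rh ∧
      3 * rh ^ 2 - 6 ≠ 0 ∧
      (D3 α rh).PosSemidef ∧ (D3 α rh).rank = 2 := by
  have hab : α * (starRingEnd ℂ) α = 1 := by
    rw [Complex.mul_conj, Complex.normSq_eq_norm_sq, hα]; norm_num
  -- determinant formula
  have hdet : ∀ r : ℝ, (D3 α r).det = (r : ℂ) ^ 3 - 6 * (r : ℂ) + 2 * α + 2 * (starRingEnd ℂ) α := by
    intro r
    simp [D3, Matrix.det_fin_three]
    linear_combination (2 * (α + (starRingEnd ℂ) α) - (r : ℂ) * (4 * (α * (starRingEnd ℂ) α) + 5)) * hab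
  refine ⟨hdet, ?_⟩
  set c : ℝ := 4 * α.re with hc
  -- bridge between complex equation and real cubic
  have bridge : ∀ r : ℝ, (r : ℂ) ^ 3 - 6 * (r : ℂ) + 2 * α + 2 * (starRingEnd ℂ) α
      = ((r ^ 3 - 6 * r + c : ℝ) : ℂ) := by
    intro r
    have h := Complex.add_conj α
    simp only [hc]
    push_cast at h ⊢
    linear_combination 2 * h
  set p : ℝ → ℝ := fun x => x ^ 3 - 6 * x + c with hp
  have hreabs := Complex.abs_re_le_norm α
  rw [hα] at hreabs
  obtain ⟨hre1, hre2⟩ := abs_le.mp hreabs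
  have hc4 : c ≤ 4 := by rw [hc]; linarith
  have hcm4 : -4 ≤ c := by rw [hc]; linarith
  have hs2 : (Real.sqrt 2) ^ 2 = 2 := Real.sq_sqrt (by norm_num)
  have hs2nn : (0:ℝ) ≤ Real.sqrt 2 := Real.sqrt_nonneg 2
  have hs2gt1 : (1:ℝ) < Real.sqrt 2 := by nlinarith
  have hsle3 : Real.sqrt 2 ≤ 3 := by nlinarith
  -- p at endpoints
  have hpa : p (Real.sqrt 2) < 0 := by
    simp only [hp]
    have h3 : (Real.sqrt 2) ^ 3 = 2 * Real.sqrt 2 := by nlinarith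
    rw [h3]; nlinarith
  have hpb : 0 < p 3 := by simp only [hp]; nlinarith
  -- root by IVT
  obtain ⟨rh, hrhmem, hrhroot⟩ : ∃ rh ∈ Set.Icc (Real.sqrt 2) 3, p rh = 0 := by
    have hcont : ContinuousOn p (Set.Icc (Real.sqrt 2) 3) := by fun_prop
    have h0 : (0:ℝ) ∈ Set.Icc (p (Real.sqrt 2)) (p 3) := ⟨le_of_lt hpa, le_of_lt hpb⟩
    obtain ⟨x, hx, hx0⟩ := intermediate_value_Icc hsle3 hcont h0
    exact ⟨x, hx, hx0⟩
  have hrhgt : Real.sqrt 2 < rh := by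
    rcases lt_or_eq_of_le hrhmem.1 with h | h
    · exact h
    · exfalso; rw [← h] at hrhroot; linarith
  have hrhpos : 0 < rh := lt_of_le_of_lt (by nlinarith) hrhgt
  have hrh2 : 2 < rh ^ 2 := by nlinarith
  have hrhgt1 : 1 < rh := lt_trans hs2gt1 hrhgt
  -- strict monotonicity on [√2, ∞)
  have hmono : StrictMonoOn p (Set.Ici (Real.sqrt 2)) := by
    apply strictMonoOn_of_deriv_pos (convex_Ici _)
    · fun_prop
    · intro x hx
      rw [interior_Ici] at hx
      have hdx : deriv p x = 3 * x ^ 2 - 6 := by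
        have h1 : HasDerivAt p (3 * x ^ 2 - 6) x := by
          have := ((hasDerivAt_pow 3 x).sub ((hasDerivAt_id x).const_mul 6)).add_const c
          simpa [hp] using this
        exact h1.deriv
      rw [hdx]
      have hxgt : Real.sqrt 2 < x := hx
      nlinarith
  -- complex root
  have hrootC : (rh : ℂ) ^ 3 - 6 * (rh : ℂ) + 2 * α + 2 * (starRingEnd ℂ) α = 0 := by
    rw [bridge rh]
    exact_mod_cast congrArg (Complex.ofReal) hrhroot
  have hmax : ∀ s : ℝ, (s : ℂ) ^ 3 - 6 * (s : ℂ) + 2 * α + 2 * (starRingEnd ℂ) α = 0 → s ≤ rh := by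
    intro s hs
    rw [bridge s, Complex.ofReal_eq_zero] at hs
    have hps : p s = 0 := hs
    by_contra hlt
    push_neg at hlt
    have := hmono (le_of_lt hrhgt) (le_of_lt (lt_trans hrhgt hlt)) hlt
    rw [hrhroot, hps] at this
    exact lt_irrefl 0 this
  have hsimple : 3 * rh ^ 2 - 6 ≠ 0 := by nlinarith
  -- Cholesky factorization
  set d : ℝ := rh - 1 / rh with hd
  have hdpos : 0 < d := by
    rw [hd, lt_sub_iff_add_lt, zero_add, div_lt_iff₀ hrhpos]
    nlinarith
  set sr : ℝ := Real.sqrt rh with hsr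
  set sd : ℝ := Real.sqrt d with hsd
  have hsr2 : (sr : ℂ) ^ 2 = (rh : ℂ) := by
    rw [hsr]; norm_cast; exact Real.sq_sqrt (le_of_lt hrhpos)
  have hsd2 : (sd : ℂ) ^ 2 * (rh : ℂ) = (rh : ℂ) ^ 2 - 1 := by
    have h1 : (sd:ℝ) ^ 2 = d := Real.sq_sqrt (le_of_lt hdpos)
    have h2 : (sd:ℝ) ^ 2 * rh = rh ^ 2 - 1 := by
      rw [h1, hd]; field_simp
    exact_mod_cast congrArg Complex.ofReal h2
  have hsrne : (sr : ℂ) ≠ 0 := by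
    norm_cast; exact ne_of_gt (Real.sqrt_pos.mpr hrhpos)
  have hsdne : (sd : ℂ) ≠ 0 := by
    norm_cast; exact ne_of_gt (Real.sqrt_pos.mpr hdpos)
  have hrhne : (rh : ℂ) ≠ 0 := by norm_cast; exact ne_of_gt hrhpos
  set B : Matrix (Fin 2) (Fin 3) ℂ :=
    !![(sr : ℂ), (starRingEnd ℂ) α / sr, 2 * ((starRingEnd ℂ) α) ^ 2 / sr;
       0, (sd : ℂ), (1 - 2 * (starRingEnd ℂ) α / rh) / sd] with hB
  have hAB : D3 α rh = B.conjTranspose * B := by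
    rw [hB]
    ext i j
    fin_cases i <;> fin_cases j <;>
      (try simp [D3, Matrix.mul_apply, Fin.sum_univ_two, Complex.conj_ofReal, map_div₀, map_ofNat]) <;>
      (try field_simp)
    · linear_combination -hsr2
    · linear_combination ((rh:ℂ) - (sd:ℂ)^2) * hsr2 - hsd2 - hab
    · linear_combination 2*(starRingEnd ℂ) α*hsr2 - 2*(starRingEnd ℂ) α*(rh:ℂ)*hab
    · linear_combination 2*α*hsr2 - 2*α*(rh:ℂ)*hab
    · linear_combination ((rh:ℂ)^3*(sd:ℂ)^2 - ((rh:ℂ)-2*α)*((rh:ℂ)-2*(starRingEnd ℂ) α))*hsr2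
        + (-(4:ℂ)*(rh:ℂ)^2*(sd:ℂ)^2*(α*(starRingEnd ℂ) α+1) - 4*(rh:ℂ))*hab
        + (rh:ℂ)^2*hrootC + ((rh:ℂ)^3-4*(rh:ℂ))*hsd2
  have hPSD : (D3 α rh).PosSemidef := by
    rw [hAB]; exact Matrix.posSemidef_conjTranspose_mul_self B
  have hrank : (D3 α rh).rank = 2 := by
    rw [hAB, Matrix.rank_conjTranspose_mul_self]
    refine le_antisymm ?_ ?_
    · simpa using Matrix.rank_le_card_height B
    · set E : Matrix (Fin 3) (Fin 2) ℂ := !![1, 0; 0, 1; 0, 0] with hE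
      have hBE : B * E = !![(sr : ℂ), (starRingEnd ℂ) α / sr; 0, (sd : ℂ)] := by
        rw [hB, hE]
        ext i j
        fin_cases i <;> fin_cases j <;>
          simp [Matrix.mul_apply, Fin.sum_univ_three, Matrix.vecHead, Matrix.vecTail]
      have hdetne : (!![(sr : ℂ), (starRingEnd ℂ) α / sr; 0, (sd : ℂ)]).det ≠ 0 := by
        rw [Matrix.det_fin_two_of]
        simpa using mul_ne_zero hsrne hsdne
      have h2 : (B * E).rank = 2 := by
        rw [hBE]
        have hu : IsUnit (!![(sr : ℂ), (starRingEnd ℂ) α / sr; 0, (sd : ℂ)]) :=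
          (Matrix.isUnit_iff_isUnit_det _).mpr (isUnit_iff_ne_zero.mpr hdetne)
        simpa using Matrix.rank_of_isUnit _ hu
      calc (2:ℕ) = (B * E).rank := h2.symm
        _ ≤ B.rank := Matrix.rank_mul_le_left B E
  exact ⟨rh, hrootC, hmax, hrhpos, hsimple, hPSD, hrank⟩
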